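/- Let α ∈ (0,1) ∪ (1,2), let ρ and σ be quantum states on ℂ^d with supp(ρ) = supp(σ), let ν > 0 and ε_V ≥ 0, and let m ≥ 1, t₁,…,t_m ∈ [0,1], w₁,…,w_m > 0 be such that h_m(x) := 1 + (sin(απ)/π)·Σ_{j=1}^m w_j f_{t_j}(x) satisfies |x^{1−α} − h_m(x)| ≤ |1−α|·α·ν·(x−1)²/x for all x > 0. Suppose real numbers D̂₁,…,D̂_m satisfy |D̂_j − D_{f_{t_j}}(ρ‖σ)| ≤ ε_V·|D_{f_{t_j}}(ρ‖σ)| for every j, and set Q̂_α(ρ‖σ) := 1 + (sin(απ)/π)·Σ_{j=1}^m w_j·D̂_j. Then |Q_α(ρ‖σ) − Q̂_α(ρ‖σ)| ≤ C₁·ν·(1+ε_V) + C₂·ε_V, where C₁ := 2·|α(1−α)|·(Q₂(ρ‖σ) − 1), C₂ := |Q_α(ρ‖σ) − 1|, Q_α(ρ‖σ) = tr[ρ^α σ^{1−α}] (matrix powers by functional calculus on the support), and Q₂(ρ‖σ) = tr[ρ² σ⁺] with σ⁺ the Moore–Penrose pseudo-inverse of σ. -/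

import Mathlib

noncomputable section

namespace QRE

open scoped ComplexOrder

open Matrix

variable {d : ℕ}

/-- The rank-one projector `|u⟩⟨u|` associated with a vector `u ∈ ℂ^d`. -/
def rankOne (u : EuclideanSpace ℂ (Fin d)) : Matrix (Fin d) (Fin d) ℂ :=
  Matrix.of fun i j => u i * (starRingEnd ℂ) (u j)

/-- Functional calculus on the support of a Hermitian matrix: apply `g` to the
positive eigenvalues, and `0` to the rest. -/
def matFun (g : ℝ → ℝ) {A : Matrix (Fin d) (Fin d) ℂ} (hA : A.IsHermitian) :
    Matrix (Fin d) (Fin d) ℂ :=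
  ∑ j, (if 0 < hA.eigenvalues j then (g (hA.eigenvalues j) : ℂ) else 0) •
    rankOne (hA.eigenvectorBasis j)

/-- The orthogonal projection onto the support (column space) of a Hermitian matrix. -/
def suppProj {A : Matrix (Fin d) (Fin d) ℂ} (hA : A.IsHermitian) :
    Matrix (Fin d) (Fin d) ℂ :=
  matFun (fun _ => 1) hA

/-- The standard quantum `f`-divergence (for `supp ρ ⊆ supp σ`, where the `f(0⁺)` term
vanishes): `D_f(ρ‖σ) = Σ_{j : η_j > 0} Σ_{k : μ_k > 0} η_j f(μ_k/η_j) tr[P_j Q_k]`. -/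
def Df (f : ℝ → ℝ) {ρ σ : Matrix (Fin d) (Fin d) ℂ}
    (hρ : ρ.IsHermitian) (hσ : σ.IsHermitian) : ℝ :=
  ∑ j, ∑ k,
    if 0 < hρ.eigenvalues j ∧ 0 < hσ.eigenvalues k then
      hρ.eigenvalues j * f (hσ.eigenvalues k / hρ.eigenvalues j) *
        (Matrix.trace (rankOne (hρ.eigenvectorBasis j) *
          rankOne (hσ.eigenvectorBasis k))).re
    else 0

/-- `f_t(x) = (x-1)/(t(x-1)+1)`. -/
def ft (t x : ℝ) : ℝ := (x - 1) / (t * (x - 1) + 1)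

/-- A quantum state: positive semidefinite with unit trace. -/
def IsState (ρ : Matrix (Fin d) (Fin d) ℂ) : Prop := ρ.PosSemidef ∧ ρ.trace = 1

/-- The Umegaki relative entropy `tr[ρ (log₂ ρ − log₂ σ)]` (logs on the supports). -/
def relEnt {ρ σ : Matrix (Fin d) (Fin d) ℂ} (hρ : ρ.IsHermitian) (hσ : σ.IsHermitian) : ℝ :=
  (Matrix.trace (ρ * (matFun (Real.logb 2) hρ - matFun (Real.logb 2) hσ))).re

/-- `Q_α(ρ‖σ) = tr[ρ^α σ^{1-α}]`, matrix powers by functional calculus on the support. -/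
def Qalpha (α : ℝ) {ρ σ : Matrix (Fin d) (Fin d) ℂ}
    (hρ : ρ.IsHermitian) (hσ : σ.IsHermitian) : ℝ :=
  (Matrix.trace (matFun (fun y => y ^ α) hρ * matFun (fun y => y ^ (1 - α)) hσ)).re

/-- `Q₀(ρ‖σ) = tr[ρ⁰ σ]`. -/
def Qzero {ρ : Matrix (Fin d) (Fin d) ℂ} (hρ : ρ.IsHermitian)
    (σ : Matrix (Fin d) (Fin d) ℂ) : ℝ :=
  (Matrix.trace (suppProj hρ * σ)).re

/-- `Q₂(ρ‖σ) = tr[ρ² σ⁺]`, with `σ⁺` the Moore–Penrose pseudo-inverse of `σ`. -/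
def Qtwo (ρ : Matrix (Fin d) (Fin d) ℂ) {σ : Matrix (Fin d) (Fin d) ℂ}
    (hσ : σ.IsHermitian) : ℝ :=
  (Matrix.trace (ρ * ρ * matFun (fun y => y⁻¹) hσ)).re

lemma rankOne_mul_rankOne (u v : EuclideanSpace ℂ (Fin d)) :
    rankOne u * rankOne v =
      (inner ℂ u v : ℂ) • Matrix.of (fun i j => u i * (starRingEnd ℂ) (v j)) := by
  ext i j
  simp only [rankOne, Matrix.mul_apply, Matrix.of_apply, Matrix.smul_apply, smul_eq_mul,
    PiLp.inner_apply, RCLike.inner_apply, Finset.sum_mul]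
  apply Finset.sum_congr rfl
  intros; ring

lemma trace_rankOne_mul (u v : EuclideanSpace ℂ (Fin d)) :
    Matrix.trace (rankOne u * rankOne v) = ((Complex.normSq (inner ℂ u v : ℂ) : ℝ) : ℂ) := by
  rw [rankOne_mul_rankOne, Matrix.trace_smul]
  have : Matrix.trace (Matrix.of fun i j => u i * (starRingEnd ℂ) (v j)) =
      (starRingEnd ℂ) (inner ℂ u v : ℂ) := by
    simp only [Matrix.trace, Matrix.diag_apply, Matrix.of_apply, PiLp.inner_apply,
      RCLike.inner_apply, map_sum]
    apply Finset.sum_congr rfl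
    intros; simp [mul_comm]
  rw [this, smul_eq_mul, Complex.mul_conj]

lemma spectral_sum {A : Matrix (Fin d) (Fin d) ℂ} (hA : A.IsHermitian) :
    A = ∑ j, (hA.eigenvalues j : ℂ) • rankOne (hA.eigenvectorBasis j) := by
  conv_lhs => rw [hA.spectral_theorem]
  ext i i'
  simp only [Matrix.sum_apply, Matrix.smul_apply, rankOne, Matrix.of_apply, smul_eq_mul,
    Matrix.mul_apply, Matrix.diagonal_apply, Function.comp_apply, Matrix.star_apply,
    Matrix.IsHermitian.eigenvectorUnitary_apply, mul_ite, mul_zero, Finset.sum_ite_eq',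
    Finset.mem_univ, if_true, Unitary.conjStarAlgAut_apply]
  apply Finset.sum_congr rfl
  intro l _
  exact (mul_right_comm (hA.eigenvectorBasis l i) ((hA.eigenvalues l : ℂ)) ((starRingEnd ℂ) (hA.eigenvectorBasis l i'))) |>.trans (by rw [mul_comm ((hA.eigenvalues l : ℂ))])

lemma sq_eq_matFun {A : Matrix (Fin d) (Fin d) ℂ} (hA : A.PosSemidef) :
    A * A = matFun (fun y => y * y) hA.1 := by
  have horth := (orthonormal_iff_ite.mp hA.1.eigenvectorBasis.orthonormal)
  conv_lhs => rw [spectral_sum hA.1, Finset.sum_mul]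
  unfold matFun
  apply Finset.sum_congr rfl
  intro j _
  rw [Finset.mul_sum, Finset.sum_eq_single j]
  · rw [smul_mul_assoc, mul_smul_comm, rankOne_mul_rankOne, horth]
    simp only [if_pos rfl, one_smul]
    have hre : (Matrix.of fun i i' => hA.1.eigenvectorBasis j i *
        (starRingEnd ℂ) (hA.1.eigenvectorBasis j i')) = rankOne (hA.1.eigenvectorBasis j) := rfl
    rw [hre, smul_smul]
    by_cases h : 0 < hA.1.eigenvalues j
    · rw [if_pos h]; push_cast; simp
    · have h0 : hA.1.eigenvalues j = 0 := le_antisymm (not_lt.mp h) (hA.eigenvalues_nonneg j)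
      rw [if_neg h, h0]; simp
  · intro l _ hlj
    rw [smul_mul_assoc, mul_smul_comm, rankOne_mul_rankOne, horth,
      if_neg (fun h => hlj h.symm)]
    simp
  · simp

lemma mem_range_of_pos {A : Matrix (Fin d) (Fin d) ℂ} (hA : A.IsHermitian) {j : Fin d}
    (h : 0 < hA.eigenvalues j) :
    ⇑(hA.eigenvectorBasis j) ∈ LinearMap.range A.mulVecLin := by
  refine ⟨((hA.eigenvalues j : ℂ))⁻¹ • ⇑(hA.eigenvectorBasis j), ?_⟩
  rw [Matrix.mulVecLin_apply, Matrix.mulVec_smul, hA.mulVec_eigenvectorBasis]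
  funext i
  simp only [Pi.smul_apply, smul_eq_mul, Complex.real_smul]
  rw [← mul_assoc, inv_mul_cancel₀ (show ((hA.eigenvalues j : ℝ) : ℂ) ≠ 0 by
    exact_mod_cast h.ne'), one_mul]

lemma inner_mulVec_eq_zero {σ : Matrix (Fin d) (Fin d) ℂ} (hσ : σ.IsHermitian)
    {x y : EuclideanSpace ℂ (Fin d)} (hx : σ *ᵥ ⇑x = 0)
    (hy : ⇑y ∈ LinearMap.range σ.mulVecLin) : (inner ℂ x y : ℂ) = 0 := by
  obtain ⟨w, hw⟩ := hy
  rw [Matrix.mulVecLin_apply] at hw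
  have h1 : (inner ℂ x y : ℂ) = star (⇑x) ⬝ᵥ (σ *ᵥ w) := by
    rw [hw]
    simp [PiLp.inner_apply, dotProduct, RCLike.inner_apply]
    exact Finset.sum_congr rfl (fun _ _ => mul_comm _ _)
  have h2 : star (⇑x) ᵥ* σ = 0 := by
    have h3 := Matrix.star_mulVec σ (⇑x)
    rw [hσ.eq] at h3
    rw [← h3, hx, star_zero]
  rw [h1, Matrix.dotProduct_mulVec, h2, zero_dotProduct]

lemma sum_normSq_row {A B : Matrix (Fin d) (Fin d) ℂ} (hA : A.IsHermitian)
    (hBps : B.PosSemidef)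
    (hsub : LinearMap.range A.mulVecLin ≤ LinearMap.range B.mulVecLin) {j : Fin d}
    (hj : 0 < hA.eigenvalues j) :
    ∑ k, (if 0 < hBps.1.eigenvalues k then
      Complex.normSq (inner ℂ (hA.eigenvectorBasis j) (hBps.1.eigenvectorBasis k) : ℂ)
      else 0) = 1 := by
  have hmem : ⇑(hA.eigenvectorBasis j) ∈ LinearMap.range B.mulVecLin :=
    hsub (mem_range_of_pos hA hj)
  have hstep : ∀ k, (if 0 < hBps.1.eigenvalues k then
      Complex.normSq (inner ℂ (hA.eigenvectorBasis j) (hBps.1.eigenvectorBasis k) : ℂ)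
      else 0) =
      Complex.normSq (inner ℂ (hA.eigenvectorBasis j) (hBps.1.eigenvectorBasis k) : ℂ) := by
    intro k
    by_cases h : 0 < hBps.1.eigenvalues k
    · rw [if_pos h]
    · rw [if_neg h]
      have h0 : hBps.1.eigenvalues k = 0 :=
        le_antisymm (not_lt.mp h) (hBps.eigenvalues_nonneg k)
      have hker : B *ᵥ ⇑(hBps.1.eigenvectorBasis k) = 0 := by
        rw [hBps.1.mulVec_eigenvectorBasis, h0, zero_smul]
      have hz : (inner ℂ (hBps.1.eigenvectorBasis k) (hA.eigenvectorBasis j) : ℂ) = 0 :=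
        inner_mulVec_eq_zero hBps.1 hker hmem
      rw [← inner_conj_symm, hz, map_zero, Complex.normSq_zero]
  rw [Finset.sum_congr rfl (fun k _ => hstep k)]
  have hpar := (hBps.1.eigenvectorBasis).sum_inner_mul_inner
    (hA.eigenvectorBasis j) (hA.eigenvectorBasis j)
  have hre := congrArg Complex.re hpar
  rw [Complex.re_sum] at hre
  have hterm : ∀ k, ((inner ℂ (hA.eigenvectorBasis j) (hBps.1.eigenvectorBasis k) : ℂ) *
      (inner ℂ (hBps.1.eigenvectorBasis k) (hA.eigenvectorBasis j) : ℂ)).re =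
      Complex.normSq (inner ℂ (hA.eigenvectorBasis j) (hBps.1.eigenvectorBasis k) : ℂ) := by
    intro k
    rw [← inner_conj_symm (𝕜 := ℂ) (hA.eigenvectorBasis j), mul_comm, Complex.mul_conj,
      Complex.normSq_conj]
    simp
  rw [Finset.sum_congr rfl (fun k _ => hterm k)] at hre
  rw [hre]
  have : (inner ℂ (hA.eigenvectorBasis j) (hA.eigenvectorBasis j) : ℂ).re
      = ‖hA.eigenvectorBasis j‖ ^ 2 := by
    simpa using inner_self_eq_norm_sq (𝕜 := ℂ) (hA.eigenvectorBasis j)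
  rw [this, hA.eigenvectorBasis.orthonormal.1 j, one_pow]

lemma trace_rankOne (u : EuclideanSpace ℂ (Fin d)) :
    Matrix.trace (rankOne u) = ((‖u‖ ^ 2 : ℝ) : ℂ) := by
  have h := inner_self_eq_norm_sq_to_K (𝕜 := ℂ) u
  rw [PiLp.inner_apply] at h
  simp only [RCLike.inner_apply] at h
  calc Matrix.trace (rankOne u) = ∑ i, u i * (starRingEnd ℂ) (u i) := rfl
  _ = ∑ i, (starRingEnd ℂ) (u i) * u i := by apply Finset.sum_congr rfl; intros; ring
  _ = ((‖u‖ ^ 2 : ℝ) : ℂ) := by exact (Finset.sum_congr rfl (fun i _ => mul_comm _ _)).trans (h.trans (by simp))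

lemma trace_re_eq_sum {A : Matrix (Fin d) (Fin d) ℂ} (hA : A.IsHermitian) :
    (Matrix.trace A).re = ∑ j, hA.eigenvalues j := by
  conv_lhs => rw [spectral_sum hA]
  rw [Matrix.trace_sum, Complex.re_sum]
  apply Finset.sum_congr rfl
  intro j _
  rw [Matrix.trace_smul, trace_rankOne, hA.eigenvectorBasis.orthonormal.1 j]
  simp

lemma trace_matFun_mul {ρ σ : Matrix (Fin d) (Fin d) ℂ} (hρ : ρ.IsHermitian)
    (hσ : σ.IsHermitian) (g h : ℝ → ℝ) :
    (Matrix.trace (matFun g hρ * matFun h hσ)).re =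
      ∑ j, ∑ k, if 0 < hρ.eigenvalues j ∧ 0 < hσ.eigenvalues k then
        g (hρ.eigenvalues j) * h (hσ.eigenvalues k) *
          (Matrix.trace (rankOne (hρ.eigenvectorBasis j) *
            rankOne (hσ.eigenvectorBasis k))).re
        else 0 := by
  unfold matFun
  rw [Finset.sum_mul, Matrix.trace_sum, Complex.re_sum]
  apply Finset.sum_congr rfl
  intro j _
  rw [Finset.mul_sum, Matrix.trace_sum, Complex.re_sum]
  apply Finset.sum_congr rfl
  intro k _
  rw [smul_mul_assoc, mul_smul_comm, smul_smul, Matrix.trace_smul, smul_eq_mul]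
  by_cases h1 : 0 < hρ.eigenvalues j
  · by_cases h2 : 0 < hσ.eigenvalues k
    · rw [if_pos h1, if_pos h2, if_pos ⟨h1, h2⟩, ← Complex.ofReal_mul,
        Complex.re_ofReal_mul, mul_assoc]
    · simp [h1, h2]
  · simp [h1]

section Fsum
variable {ρ σ : Matrix (Fin d) (Fin d) ℂ}

def Fsum (hρ : ρ.IsHermitian) (hσ : σ.IsHermitian) (f : ℝ → ℝ) : ℝ :=
  ∑ j, ∑ k,
    if 0 < hρ.eigenvalues j ∧ 0 < hσ.eigenvalues k then
      hρ.eigenvalues j * f (hσ.eigenvalues k / hρ.eigenvalues j) *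
        (Matrix.trace (rankOne (hρ.eigenvectorBasis j) *
          rankOne (hσ.eigenvectorBasis k))).re
    else 0

variable (hρ : ρ.IsHermitian) (hσ : σ.IsHermitian)

lemma P_nonneg (j k : Fin d) :
    0 ≤ (Matrix.trace (rankOne (hρ.eigenvectorBasis j) *
      rankOne (hσ.eigenvectorBasis k))).re := by
  rw [trace_rankOne_mul, Complex.ofReal_re]
  exact Complex.normSq_nonneg _

lemma Fsum_mono {f g : ℝ → ℝ} (h : ∀ x > (0 : ℝ), f x ≤ g x) :
    Fsum hρ hσ f ≤ Fsum hρ hσ g := by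
  apply Finset.sum_le_sum
  intro j _
  apply Finset.sum_le_sum
  intro k _
  by_cases hc : 0 < hρ.eigenvalues j ∧ 0 < hσ.eigenvalues k
  · rw [if_pos hc, if_pos hc]
    exact mul_le_mul_of_nonneg_right
      (mul_le_mul_of_nonneg_left (h _ (div_pos hc.2 hc.1)) hc.1.le)
      (P_nonneg hρ hσ j k)
  · rw [if_neg hc, if_neg hc]

lemma abs_Fsum_le {f g : ℝ → ℝ} (h : ∀ x > (0 : ℝ), |f x| ≤ g x) :
    |Fsum hρ hσ f| ≤ Fsum hρ hσ g := by
  refine (Finset.abs_sum_le_sum_abs _ _).trans ?_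
  apply Finset.sum_le_sum
  intro j _
  refine (Finset.abs_sum_le_sum_abs _ _).trans ?_
  apply Finset.sum_le_sum
  intro k _
  by_cases hc : 0 < hρ.eigenvalues j ∧ 0 < hσ.eigenvalues k
  · rw [if_pos hc, if_pos hc, abs_mul, abs_mul,
      abs_of_nonneg hc.1.le, abs_of_nonneg (P_nonneg hρ hσ j k)]
    exact mul_le_mul_of_nonneg_right
      (mul_le_mul_of_nonneg_left (h _ (div_pos hc.2 hc.1)) hc.1.le)
      (P_nonneg hρ hσ j k)
  · rw [if_neg hc, if_neg hc, abs_zero]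

lemma Fsum_linear (a b : ℝ) (f g : ℝ → ℝ) :
    Fsum hρ hσ (fun x => a * f x + b * g x) =
      a * Fsum hρ hσ f + b * Fsum hρ hσ g := by
  unfold Fsum
  rw [Finset.mul_sum, Finset.mul_sum, ← Finset.sum_add_distrib]
  apply Finset.sum_congr rfl
  intro j _
  rw [Finset.mul_sum, Finset.mul_sum, ← Finset.sum_add_distrib]
  apply Finset.sum_congr rfl
  intro k _
  by_cases hc : 0 < hρ.eigenvalues j ∧ 0 < hσ.eigenvalues k
  · rw [if_pos hc, if_pos hc, if_pos hc]; ring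
  · rw [if_neg hc, if_neg hc, if_neg hc]; ring

lemma Fsum_congr {f g : ℝ → ℝ} (h : ∀ x > (0 : ℝ), f x = g x) :
    Fsum hρ hσ f = Fsum hρ hσ g := by
  apply Finset.sum_congr rfl
  intro j _
  apply Finset.sum_congr rfl
  intro k _
  by_cases hc : 0 < hρ.eigenvalues j ∧ 0 < hσ.eigenvalues k
  · rw [if_pos hc, if_pos hc, h _ (div_pos hc.2 hc.1)]
  · rw [if_neg hc, if_neg hc]

lemma Fsum_weighted {m : ℕ} (W : Fin m → ℝ) (g : Fin m → ℝ → ℝ) :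
    Fsum hρ hσ (fun x => ∑ l, W l * g l x) = ∑ l, W l * Fsum hρ hσ (g l) := by
  have hrhs : ∑ l, W l * Fsum hρ hσ (g l) =
      ∑ l, ∑ j, ∑ k, W l * (if 0 < hρ.eigenvalues j ∧ 0 < hσ.eigenvalues k then
        hρ.eigenvalues j * g l (hσ.eigenvalues k / hρ.eigenvalues j) *
          (Matrix.trace (rankOne (hρ.eigenvectorBasis j) *
            rankOne (hσ.eigenvectorBasis k))).re
      else 0) := by
    apply Finset.sum_congr rfl
    intro l _
    rw [Fsum, Finset.mul_sum]
    apply Finset.sum_congr rfl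
    intro j _
    rw [Finset.mul_sum]
  rw [hrhs, Finset.sum_comm]
  apply Finset.sum_congr rfl
  intro j _
  rw [Finset.sum_comm]
  apply Finset.sum_congr rfl
  intro k _
  by_cases hc : 0 < hρ.eigenvalues j ∧ 0 < hσ.eigenvalues k
  · rw [if_pos hc]
    rw [Finset.sum_congr rfl (fun l _ => by rw [if_pos hc])]
    rw [show hρ.eigenvalues j * (∑ l, W l * g l (hσ.eigenvalues k / hρ.eigenvalues j)) *
        (Matrix.trace (rankOne (hρ.eigenvectorBasis j) *
          rankOne (hσ.eigenvectorBasis k))).re =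
      ∑ l, W l * (hρ.eigenvalues j * g l (hσ.eigenvalues k / hρ.eigenvalues j) *
        (Matrix.trace (rankOne (hρ.eigenvectorBasis j) *
          rankOne (hσ.eigenvectorBasis k))).re) from by
        rw [Finset.mul_sum, Finset.sum_mul]
        apply Finset.sum_congr rfl
        intros; ring]
  · rw [if_neg hc]
    symm
    apply Finset.sum_eq_zero
    intro l _
    rw [if_neg hc, mul_zero]

end Fsum

section FsumVal
variable {ρ σ : Matrix (Fin d) (Fin d) ℂ}

lemma P_eq (u v : EuclideanSpace ℂ (Fin d)) :
    (Matrix.trace (rankOne u * rankOne v)).re = Complex.normSq (inner ℂ u v : ℂ) := by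
  rw [trace_rankOne_mul, Complex.ofReal_re]

lemma normSq_inner_symm (u v : EuclideanSpace ℂ (Fin d)) :
    Complex.normSq (inner ℂ u v : ℂ) = Complex.normSq (inner ℂ v u : ℂ) := by
  rw [← inner_conj_symm, Complex.normSq_conj]

lemma Fsum_one (hρps : ρ.PosSemidef) (hρtr : ρ.trace = 1) (hσps : σ.PosSemidef)
    (hsub : LinearMap.range ρ.mulVecLin ≤ LinearMap.range σ.mulVecLin) :
    Fsum hρps.1 hσps.1 (fun _ => 1) = 1 := by
  unfold Fsum
  have hrow : ∀ j, (∑ k, if 0 < hρps.1.eigenvalues j ∧ 0 < hσps.1.eigenvalues k then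
        hρps.1.eigenvalues j * 1 *
          (Matrix.trace (rankOne (hρps.1.eigenvectorBasis j) *
            rankOne (hσps.1.eigenvectorBasis k))).re else 0)
      = hρps.1.eigenvalues j := by
    intro j
    by_cases hj : 0 < hρps.1.eigenvalues j
    · have hterm : ∀ k, (if 0 < hρps.1.eigenvalues j ∧ 0 < hσps.1.eigenvalues k then
          hρps.1.eigenvalues j * 1 *
            (Matrix.trace (rankOne (hρps.1.eigenvectorBasis j) *
              rankOne (hσps.1.eigenvectorBasis k))).re else 0)
          = hρps.1.eigenvalues j * (if 0 < hσps.1.eigenvalues k then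
              Complex.normSq (inner ℂ (hρps.1.eigenvectorBasis j)
                (hσps.1.eigenvectorBasis k) : ℂ) else 0) := by
        intro k
        by_cases hk : 0 < hσps.1.eigenvalues k
        · rw [if_pos ⟨hj, hk⟩, if_pos hk, mul_one, P_eq]
        · rw [if_neg (fun hc => hk hc.2), if_neg hk, mul_zero]
      rw [Finset.sum_congr rfl (fun k _ => hterm k), ← Finset.mul_sum,
        sum_normSq_row hρps.1 hσps hsub hj, mul_one]
    · have h0 : hρps.1.eigenvalues j = 0 :=
        le_antisymm (not_lt.mp hj) (hρps.eigenvalues_nonneg j)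
      rw [Finset.sum_eq_zero (fun k _ => by rw [if_neg (fun hc => hj hc.1)]), h0]
  rw [Finset.sum_congr rfl (fun j _ => hrow j), ← trace_re_eq_sum hρps.1, hρtr]
  simp

lemma Fsum_id (hρps : ρ.PosSemidef) (hσps : σ.PosSemidef) (hσtr : σ.trace = 1)
    (hsub : LinearMap.range σ.mulVecLin ≤ LinearMap.range ρ.mulVecLin) :
    Fsum hρps.1 hσps.1 (fun x => x) = 1 := by
  unfold Fsum
  rw [Finset.sum_comm]
  have hcol : ∀ k, (∑ j, if 0 < hρps.1.eigenvalues j ∧ 0 < hσps.1.eigenvalues k then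
        hρps.1.eigenvalues j * (hσps.1.eigenvalues k / hρps.1.eigenvalues j) *
          (Matrix.trace (rankOne (hρps.1.eigenvectorBasis j) *
            rankOne (hσps.1.eigenvectorBasis k))).re else 0)
      = hσps.1.eigenvalues k := by
    intro k
    by_cases hk : 0 < hσps.1.eigenvalues k
    · have hterm : ∀ j, (if 0 < hρps.1.eigenvalues j ∧ 0 < hσps.1.eigenvalues k then
          hρps.1.eigenvalues j * (hσps.1.eigenvalues k / hρps.1.eigenvalues j) *
            (Matrix.trace (rankOne (hρps.1.eigenvectorBasis j) *
              rankOne (hσps.1.eigenvectorBasis k))).re else 0)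
          = hσps.1.eigenvalues k * (if 0 < hρps.1.eigenvalues j then
              Complex.normSq (inner ℂ (hσps.1.eigenvectorBasis k)
                (hρps.1.eigenvectorBasis j) : ℂ) else 0) := by
        intro j
        by_cases hj : 0 < hρps.1.eigenvalues j
        · rw [if_pos ⟨hj, hk⟩, if_pos hj, P_eq,
            normSq_inner_symm, mul_div_assoc', mul_comm (hρps.1.eigenvalues j),
            mul_div_assoc, div_self hj.ne', mul_one]
        · rw [if_neg (fun hc => hj hc.1), if_neg hj, mul_zero]
      rw [Finset.sum_congr rfl (fun j _ => hterm j), ← Finset.mul_sum,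
        sum_normSq_row hσps.1 hρps hsub hk, mul_one]
    · have h0 : hσps.1.eigenvalues k = 0 :=
        le_antisymm (not_lt.mp hk) (hσps.eigenvalues_nonneg k)
      rw [Finset.sum_eq_zero (fun j _ => by rw [if_neg (fun hc => hk hc.2)]), h0]
  rw [Finset.sum_congr rfl (fun k _ => hcol k), ← trace_re_eq_sum hσps.1, hσtr]
  simp

end FsumVal

section MoreAux
variable {ρ σ : Matrix (Fin d) (Fin d) ℂ} (hρ : ρ.IsHermitian) (hσ : σ.IsHermitian)

lemma Fsum_nonneg {f : ℝ → ℝ} (h : ∀ x > (0 : ℝ), 0 ≤ f x) :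
    0 ≤ Fsum hρ hσ f := by
  apply Finset.sum_nonneg
  intro j _
  apply Finset.sum_nonneg
  intro k _
  by_cases hc : 0 < hρ.eigenvalues j ∧ 0 < hσ.eigenvalues k
  · rw [if_pos hc]
    exact mul_nonneg (mul_nonneg hc.1.le (h _ (div_pos hc.2 hc.1))) (P_nonneg hρ hσ j k)
  · rw [if_neg hc]

lemma Fsum_sub (f g : ℝ → ℝ) :
    Fsum hρ hσ (fun x => f x - g x) = Fsum hρ hσ f - Fsum hρ hσ g := by
  calc Fsum hρ hσ (fun x => f x - g x)
      = Fsum hρ hσ (fun x => 1 * f x + (-1) * g x) :=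
        Fsum_congr hρ hσ (by intro x _; ring)
    _ = 1 * Fsum hρ hσ f + (-1) * Fsum hρ hσ g := Fsum_linear hρ hσ 1 (-1) f g
    _ = Fsum hρ hσ f - Fsum hρ hσ g := by ring

lemma Fsum_const_mul (a : ℝ) (f : ℝ → ℝ) :
    Fsum hρ hσ (fun x => a * f x) = a * Fsum hρ hσ f := by
  calc Fsum hρ hσ (fun x => a * f x)
      = Fsum hρ hσ (fun x => a * f x + 0 * f x) :=
        Fsum_congr hρ hσ (by intro x _; ring)
    _ = a * Fsum hρ hσ f + 0 * Fsum hρ hσ f := Fsum_linear hρ hσ a 0 f f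
    _ = a * Fsum hρ hσ f := by ring

lemma Df_eq_Fsum (f : ℝ → ℝ) : Df f hρ hσ = Fsum hρ hσ f := rfl

lemma Qalpha_eq_Fsum (α : ℝ) :
    Qalpha α hρ hσ = Fsum hρ hσ (fun x => x ^ (1 - α)) := by
  unfold Qalpha
  rw [trace_matFun_mul]
  apply Finset.sum_congr rfl
  intro j _
  apply Finset.sum_congr rfl
  intro k _
  by_cases hc : 0 < hρ.eigenvalues j ∧ 0 < hσ.eigenvalues k
  · rw [if_pos hc, if_pos hc]
    congr 1
    beta_reduce
    have hη := hc.1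
    have hμ := hc.2
    rw [Real.div_rpow hμ.le hη.le]
    have h1 : hρ.eigenvalues j ^ α * hρ.eigenvalues j ^ (1 - α) = hρ.eigenvalues j := by
      rw [← Real.rpow_add hη, show α + (1 - α) = 1 by ring, Real.rpow_one]
    have h2 : hρ.eigenvalues j ^ (1 - α) ≠ 0 := (Real.rpow_pos_of_pos hη _).ne'
    field_simp
    linear_combination h1
  · rw [if_neg hc, if_neg hc]

lemma Qtwo_eq_Fsum (hρps : ρ.PosSemidef) :
    Qtwo ρ hσ = Fsum hρps.1 hσ (fun x => x⁻¹) := by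
  unfold Qtwo
  rw [sq_eq_matFun hρps, trace_matFun_mul]
  apply Finset.sum_congr rfl
  intro j _
  apply Finset.sum_congr rfl
  intro k _
  by_cases hc : 0 < hρps.1.eigenvalues j ∧ 0 < hσ.eigenvalues k
  · rw [if_pos hc, if_pos hc]
    congr 1
    have hη := hc.1
    have hμ := hc.2
    field_simp
  · rw [if_neg hc, if_neg hc]

end MoreAux

/-- Error bound for estimating the quasi-relative entropy (Lemma 4):
`|Q_α(ρ‖σ) − Q̂_α(ρ‖σ)| ≤ C₁ ν (1+ε_V) + C₂ ε_V` with
`C₁ = 2|α(1−α)|(Q₂(ρ‖σ) − 1)` and `C₂ = |Q_α(ρ‖σ) − 1|`. -/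
theorem error_bound_Qalpha (α : ℝ)
    (hα : α ∈ Set.Ioo (0 : ℝ) 1 ∪ Set.Ioo (1 : ℝ) 2)
    (ρ σ : Matrix (Fin d) (Fin d) ℂ) (hρ : IsState ρ) (hσ : IsState σ)
    (hsupp : LinearMap.range ρ.mulVecLin = LinearMap.range σ.mulVecLin)
    (ν : ℝ) (hν : 0 < ν) (εV : ℝ) (hεV : 0 ≤ εV)
    (m : ℕ) (hm : 1 ≤ m) (t w : Fin m → ℝ)
    (ht : ∀ j, t j ∈ Set.Icc (0 : ℝ) 1) (hw : ∀ j, 0 < w j)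
    (happrox : ∀ x > (0 : ℝ),
      |x ^ (1 - α) -
          (1 + (Real.sin (α * Real.pi) / Real.pi) * ∑ j, w j * ft (t j) x)| ≤
        |1 - α| * α * ν * (x - 1) ^ 2 / x)
    (Dhat : Fin m → ℝ)
    (hest : ∀ j, |Dhat j - Df (ft (t j)) hρ.1.1 hσ.1.1| ≤
      εV * |Df (ft (t j)) hρ.1.1 hσ.1.1|) :
    |Qalpha α hρ.1.1 hσ.1.1 -
        (1 + (Real.sin (α * Real.pi) / Real.pi) * ∑ j, w j * Dhat j)| ≤
      (2 * |α * (1 - α)| * (Qtwo ρ hσ.1.1 - 1)) * ν * (1 + εV) +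
        |Qalpha α hρ.1.1 hσ.1.1 - 1| * εV := by
  classical
  have hα0 : 0 < α := by
    rcases hα with h | h
    · exact h.1
    · exact lt_trans one_pos h.1
  have hsub1 : LinearMap.range ρ.mulVecLin ≤ LinearMap.range σ.mulVecLin := le_of_eq hsupp
  have hsub2 : LinearMap.range σ.mulVecLin ≤ LinearMap.range ρ.mulVecLin :=
    le_of_eq hsupp.symm
  set c : ℝ := Real.sin (α * Real.pi) / Real.pi with hc
  set S : ℝ := ∑ j, w j * Df (ft (t j)) hρ.1.1 hσ.1.1 with hS
  set Sh : ℝ := ∑ j, w j * Dhat j with hSh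
  set Qa : ℝ := Qalpha α hρ.1.1 hσ.1.1 with hQadef
  set Q2 : ℝ := Qtwo ρ hσ.1.1 with hQ2def
  have hF1 : Fsum hρ.1.1 hσ.1.1 (fun _ => 1) = 1 := Fsum_one hρ.1 hρ.2 hσ.1 hsub1
  have hFid : Fsum hρ.1.1 hσ.1.1 (fun x => x) = 1 := Fsum_id hρ.1 hσ.1 hσ.2 hsub2
  have hQa : Qa = Fsum hρ.1.1 hσ.1.1 (fun x => x ^ (1 - α)) :=
    Qalpha_eq_Fsum hρ.1.1 hσ.1.1 α
  have hQ2 : Q2 = Fsum hρ.1.1 hσ.1.1 (fun x => x⁻¹) := Qtwo_eq_Fsum hσ.1.1 hρ.1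
  have hFq : Fsum hρ.1.1 hσ.1.1 (fun x => (x - 1) ^ 2 / x) = Q2 - 1 := by
    calc Fsum hρ.1.1 hσ.1.1 (fun x => (x - 1) ^ 2 / x)
        = Fsum hρ.1.1 hσ.1.1 (fun x => 1 * x + 1 * (1 * x⁻¹ + (-2) * 1)) :=
          Fsum_congr hρ.1.1 hσ.1.1 (by
            intro x hx
            field_simp
            ring)
      _ = 1 * Fsum hρ.1.1 hσ.1.1 (fun x => x) +
            1 * Fsum hρ.1.1 hσ.1.1 (fun x => 1 * x⁻¹ + (-2) * 1) :=
          Fsum_linear hρ.1.1 hσ.1.1 1 1 _ _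
      _ = 1 * Fsum hρ.1.1 hσ.1.1 (fun x => x) +
            1 * (1 * Fsum hρ.1.1 hσ.1.1 (fun x => x⁻¹) +
              (-2) * Fsum hρ.1.1 hσ.1.1 (fun _ => 1)) := by
          rw [Fsum_linear hρ.1.1 hσ.1.1 1 (-2) (fun x => x⁻¹) (fun _ => 1)]
      _ = Q2 - 1 := by rw [hFid, hF1, ← hQ2]; ring
  have hQ2ge : 0 ≤ Q2 - 1 := by
    rw [← hFq]
    exact Fsum_nonneg hρ.1.1 hσ.1.1 (fun x hx => by positivity)
  set K : ℝ := |1 - α| * α * ν * (Q2 - 1) with hK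
  have hKnn : 0 ≤ K := by
    have : (0:ℝ) ≤ |1 - α| * α * ν := by positivity
    exact mul_nonneg this hQ2ge
  have hFh : Fsum hρ.1.1 hσ.1.1 (fun x => 1 + c * ∑ j, w j * ft (t j) x) = 1 + c * S := by
    calc Fsum hρ.1.1 hσ.1.1 (fun x => 1 + c * ∑ j, w j * ft (t j) x)
        = Fsum hρ.1.1 hσ.1.1 (fun x => 1 * 1 + c * ∑ j, w j * ft (t j) x) :=
          Fsum_congr hρ.1.1 hσ.1.1 (by intro x _; ring)
      _ = 1 * Fsum hρ.1.1 hσ.1.1 (fun _ => 1) +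
            c * Fsum hρ.1.1 hσ.1.1 (fun x => ∑ j, w j * ft (t j) x) :=
          Fsum_linear hρ.1.1 hσ.1.1 1 c _ _
      _ = 1 + c * S := by
          rw [hF1, Fsum_weighted hρ.1.1 hσ.1.1 w (fun j => ft (t j))]
          simp only [hS, one_mul]
          rfl
  have h1 : |Qa - (1 + c * S)| ≤ K := by
    rw [hQa, ← hFh, ← Fsum_sub hρ.1.1 hσ.1.1]
    have hb := abs_Fsum_le hρ.1.1 hσ.1.1 (f := fun x =>
        x ^ (1 - α) - (1 + c * ∑ j, w j * ft (t j) x))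
      (g := fun x => (|1 - α| * α * ν) * ((x - 1) ^ 2 / x)) (by
        intro x hx
        have := happrox x hx
        calc |x ^ (1 - α) - (1 + c * ∑ j, w j * ft (t j) x)|
            ≤ |1 - α| * α * ν * (x - 1) ^ 2 / x := this
          _ = (|1 - α| * α * ν) * ((x - 1) ^ 2 / x) := by ring)
    refine hb.trans ?_
    rw [Fsum_const_mul hρ.1.1 hσ.1.1, hFq, hK]
  have hDle : ∀ j, Df (ft (t j)) hρ.1.1 hσ.1.1 ≤ 0 := by
    intro j
    have hft : ∀ x > (0:ℝ), ft (t j) x ≤ x - 1 := by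
      intro x hx
      have ht0 := (ht j).1
      have ht1 := (ht j).2
      have hD : 0 < t j * (x - 1) + 1 := by
        by_cases hx1 : x ≤ 1
        · nlinarith [mul_nonneg (sub_nonneg.2 ht1) (sub_nonneg.2 hx1)]
        · nlinarith [mul_nonneg ht0 (by linarith : (0:ℝ) ≤ x - 1)]
      rw [ft, div_le_iff₀ hD]
      nlinarith [mul_nonneg ht0 (sq_nonneg (x - 1))]
    have hmono := Fsum_mono hρ.1.1 hσ.1.1 hft
    have hx1 : Fsum hρ.1.1 hσ.1.1 (fun x => x - 1) = 0 := by
      have := Fsum_sub hρ.1.1 hσ.1.1 (fun x => x) (fun _ => 1)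
      rw [hFid, hF1] at this
      simpa using this
    rw [Df_eq_Fsum]
    calc Fsum hρ.1.1 hσ.1.1 (ft (t j)) ≤ Fsum hρ.1.1 hσ.1.1 (fun x => x - 1) := hmono
      _ = 0 := hx1
  have hS0 : S ≤ 0 := by
    rw [hS]
    apply Finset.sum_nonpos
    intro j _
    exact mul_nonpos_of_nonneg_of_nonpos (hw j).le (hDle j)
  have habsS : ∑ j, w j * |Df (ft (t j)) hρ.1.1 hσ.1.1| = -S := by
    rw [hS, ← Finset.sum_neg_distrib]
    apply Finset.sum_congr rfl
    intro j _
    rw [abs_of_nonpos (hDle j)]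
    ring
  have h2 : |c * S - c * Sh| ≤ εV * (K + |Qa - 1|) := by
    have hstep1 : |S - Sh| ≤ εV * (-S) := by
      rw [hS, hSh, ← Finset.sum_sub_distrib]
      refine (Finset.abs_sum_le_sum_abs _ _).trans ?_
      have : ∀ j ∈ Finset.univ, |w j * Df (ft (t j)) hρ.1.1 hσ.1.1 - w j * Dhat j| ≤
          εV * (w j * |Df (ft (t j)) hρ.1.1 hσ.1.1|) := by
        intro j _
        rw [← mul_sub, abs_mul, abs_of_pos (hw j)]
        have := hest j
        calc w j * |Df (ft (t j)) hρ.1.1 hσ.1.1 - Dhat j|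
            = w j * |Dhat j - Df (ft (t j)) hρ.1.1 hσ.1.1| := by rw [abs_sub_comm]
          _ ≤ w j * (εV * |Df (ft (t j)) hρ.1.1 hσ.1.1|) :=
              mul_le_mul_of_nonneg_left (hest j) (hw j).le
          _ = εV * (w j * |Df (ft (t j)) hρ.1.1 hσ.1.1|) := by ring
      refine (Finset.sum_le_sum this).trans ?_
      rw [← Finset.mul_sum, habsS]
    have hcS : |c * S| ≤ K + |Qa - 1| := by
      calc |c * S| = |(Qa - 1) - (Qa - (1 + c * S))| := by congr 1; ring
        _ ≤ |Qa - 1| + |Qa - (1 + c * S)| := abs_sub _ _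
        _ ≤ |Qa - 1| + K := by linarith [h1]
        _ = K + |Qa - 1| := by ring
    calc |c * S - c * Sh| = |c| * |S - Sh| := by rw [← mul_sub, abs_mul]
      _ ≤ |c| * (εV * (-S)) := mul_le_mul_of_nonneg_left hstep1 (abs_nonneg c)
      _ = εV * (|c| * |S|) := by rw [abs_of_nonpos hS0]; ring
      _ = εV * |c * S| := by rw [abs_mul]
      _ ≤ εV * (K + |Qa - 1|) := mul_le_mul_of_nonneg_left hcS hεV
  have hmain : |Qa - (1 + c * Sh)| ≤ K + εV * (K + |Qa - 1|) := by
    calc |Qa - (1 + c * Sh)| = |(Qa - (1 + c * S)) + (c * S - c * Sh)| := by congr 1; ring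
      _ ≤ |Qa - (1 + c * S)| + |c * S - c * Sh| := abs_add_le _ _
      _ ≤ K + εV * (K + |Qa - 1|) := add_le_add h1 h2
  have habs : |α * (1 - α)| = α * |1 - α| := by
    rw [abs_mul, abs_of_pos hα0]
  have hRHS : (2 * |α * (1 - α)| * (Q2 - 1)) * ν * (1 + εV) = 2 * K * (1 + εV) := by
    rw [habs, hK]; ring
  have hKe : 0 ≤ K * εV := mul_nonneg hKnn hεV
  calc |Qa - (1 + c * Sh)| ≤ K + εV * (K + |Qa - 1|) := hmain
    _ ≤ 2 * K * (1 + εV) + |Qa - 1| * εV := by nlinarith [hKnn, hKe]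
    _ = (2 * |α * (1 - α)| * (Q2 - 1)) * ν * (1 + εV) + |Qa - 1| * εV := by rw [hRHS]


end QRE
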